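/- Let r ≥ 0, let f₀ and fₙ (n ∈ ℕ) be Borel probability measures on ℝ with finite first moment such that W₁(fₙ, f₀) → 0, and let Fₙ be Borel probability measures on ℝ with W₁(Fₙ, fₙ) ≤ r for every n. Then there exist a subsequence (F_{n_k}) and a Borel probability measure F₀ on ℝ with W₁(F₀, f₀) ≤ r such that F_{n_k} → F₀ weakly. -/

import Mathlib

open MeasureTheory Filter Topology Set
open scoped ENNReal

/-- Wasserstein-1 distance via the Kantorovich–Rubinstein dual formula, the supremum
over bounded 1-Lipschitz test functions being taken in `[0,∞]`. -/
noncomputable def W1e (μ ν : Measure ℝ) : ℝ≥0∞ :=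
  ⨆ f ∈ {f : ℝ → ℝ | LipschitzWith 1 f ∧ ∃ C, ∀ x, |f x| ≤ C},
    ENNReal.ofReal ((∫ x, f x ∂μ) - ∫ x, f x ∂ν)




lemma integrable_of_bdd {μ : Measure ℝ} [IsProbabilityMeasure μ] {g : ℝ → ℝ} {C : ℝ}
    (hg : Continuous g) (hC : ∀ x, |g x| ≤ C) : Integrable g μ := by
  refine ⟨hg.aestronglyMeasurable, ?_⟩
  refine HasFiniteIntegral.mono' (g := fun _ => C) ?_ (Eventually.of_forall fun x => by
    simpa [Real.norm_eq_abs] using hC x)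
  exact (integrable_const C).2

lemma w1e_integral_le {μ ν : Measure ℝ} {r : ℝ} (hr : 0 ≤ r)
    (h : W1e μ ν ≤ ENNReal.ofReal r) {f : ℝ → ℝ} (hf : LipschitzWith 1 f)
    (hb : ∃ C, ∀ x, |f x| ≤ C) : (∫ x, f x ∂μ) - ∫ x, f x ∂ν ≤ r := by
  have h1 : ENNReal.ofReal ((∫ x, f x ∂μ) - ∫ x, f x ∂ν) ≤ ENNReal.ofReal r :=
    le_trans (le_iSup₂ (f := fun f _ => ENNReal.ofReal ((∫ x, f x ∂μ) - ∫ x, f x ∂ν)) f ⟨hf, hb⟩) h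
  rcases le_or_gt ((∫ x, f x ∂μ) - ∫ x, f x ∂ν) 0 with h0 | h0
  · linarith
  · exact (ENNReal.ofReal_le_ofReal_iff hr).mp h1


lemma prob_toReal_mono {μ : Measure ℝ} [IsProbabilityMeasure μ] {s t : Set ℝ}
    (h : s ⊆ t) : (μ s).toReal ≤ (μ t).toReal :=
  ENNReal.toReal_mono (measure_ne_top μ t) (measure_mono h)

lemma single_tail (ν : Measure ℝ) [IsProbabilityMeasure ν] {ε : ℝ} (hε : 0 < ε) :
    ∃ M : ℝ, 0 < M ∧ (ν (Iic (-M))).toReal ≤ ε ∧ (ν (Ioi M)).toReal ≤ ε := by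
  set s : ℕ → Set ℝ := fun n => Iic (-(n : ℝ)) ∪ Ioi (n : ℝ) with hs
  have hmono : Antitone s := by
    intro m n hmn
    apply Set.union_subset_union
    · exact Iic_subset_Iic.2 (by exact_mod_cast neg_le_neg (Nat.cast_le.2 hmn))
    · exact Ioi_subset_Ioi (by exact_mod_cast hmn)
  have hinter : ⋂ n, s n = ∅ := by
    ext x
    simp only [Set.mem_iInter, Set.mem_empty_iff_false, iff_false, not_forall]
    refine ⟨⌈|x|⌉₊ + 1, ?_⟩
    have h1 : |x| < (⌈|x|⌉₊ + 1 : ℝ) := lt_of_le_of_lt (Nat.le_ceil _) (by exact_mod_cast Nat.lt_succ_self _)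
    simp only [hs, Set.mem_union, Set.mem_Iic, Set.mem_Ioi, not_or, not_le, not_lt]
    rw [abs_lt] at h1
    constructor
    · push_cast; linarith [h1.1]
    · push_cast; linarith [h1.2]
  have htend : Tendsto (fun n => ν (s n)) atTop (𝓝 0) := by
    have := tendsto_measure_iInter_atTop (μ := ν) (s := s)
      (fun n => ((measurableSet_Iic.union measurableSet_Ioi).nullMeasurableSet)) hmono
      ⟨0, measure_ne_top _ _⟩
    rwa [hinter, measure_empty] at this
  have := htend.eventually_lt_const (show (0:ℝ≥0∞) < ENNReal.ofReal ε by simpa using hε)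
  obtain ⟨N, hN⟩ := this.exists_forall_of_atTop
  refine ⟨(N : ℝ) + 1, by positivity, ?_, ?_⟩
  · have h1 : ν (Iic (-((N:ℝ)+1))) ≤ ν (s (N+1)) := measure_mono (by
      intro x hx; exact Or.inl (by simpa using hx))
    have h2 := (hN (N+1) (Nat.le_succ N)).le
    calc (ν (Iic (-((N:ℝ)+1)))).toReal ≤ (ν (s (N+1))).toReal :=
          ENNReal.toReal_mono (measure_ne_top _ _) h1
      _ ≤ ε := by
          rw [← ENNReal.ofReal_le_ofReal_iff hε.le] at *
          calc ENNReal.ofReal (ν (s (N+1))).toReal ≤ ν (s (N+1)) := ENNReal.ofReal_toReal_le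
            _ ≤ ENNReal.ofReal ε := h2
          |>.trans_eq rfl
  · have h1 : ν (Ioi ((N:ℝ)+1)) ≤ ν (s (N+1)) := measure_mono (by
      intro x hx; exact Or.inr (by simpa using hx))
    have h2 := (hN (N+1) (Nat.le_succ N)).le
    calc (ν (Ioi ((N:ℝ)+1))).toReal ≤ (ν (s (N+1))).toReal :=
          ENNReal.toReal_mono (measure_ne_top _ _) h1
      _ ≤ ε := by
          have := ENNReal.toReal_mono (by simp) h2
          simpa [ENNReal.toReal_ofReal hε.le] using this




lemma tight_Fn (r : ℝ) (hr : 0 ≤ r)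
    (fn : ℕ → Measure ℝ) (f0 : Measure ℝ)
    [∀ n, IsProbabilityMeasure (fn n)] [IsProbabilityMeasure f0]
    (hf0 : Integrable id f0)
    (hconv : Tendsto (fun n => W1e (fn n) f0) atTop (nhds 0))
    (Fn : ℕ → Measure ℝ) [∀ n, IsProbabilityMeasure (Fn n)]
    (hFn : ∀ n, W1e (Fn n) (fn n) ≤ ENNReal.ofReal r) {ε : ℝ} (hε : 0 < ε) :
    ∃ M : ℝ, 0 < M ∧ ∀ n,
      ((Fn n) (Iic (-M))).toReal ≤ ε ∧ ((Fn n) (Ioi M)).toReal ≤ ε := by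
  -- choose L
  set L : ℝ := max 1 ((r + 2)/ε) with hLdef
  have hL : 0 < L := lt_of_lt_of_le one_pos (le_max_left _ _)
  have hLε : (r + 2)/L ≤ ε := by
    rw [div_le_iff₀ hL]
    calc r + 2 = ε * ((r+2)/ε) := by field_simp
      _ ≤ ε * L := by
          apply mul_le_mul_of_nonneg_left (le_max_right _ _) hε.le
  -- choose m₀ with small truncated first moment of f0
  have habs : Integrable (fun x : ℝ => |x|) f0 := by simpa using hf0.abs
  have hItend : Tendsto (fun m : ℕ => ∫ x, Set.indicator {y : ℝ | (m:ℝ) < |y|} (fun y => |y|) x ∂f0)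
      atTop (𝓝 0) := by
    have h0 : (0:ℝ) = ∫ x, (0:ℝ) ∂f0 := by simp
    rw [h0]
    apply tendsto_integral_of_dominated_convergence (fun x => |x|)
    · intro m
      exact (measurable_abs.indicator (measurableSet_lt measurable_const measurable_abs)).aestronglyMeasurable
    · exact habs
    · intro m
      filter_upwards with x
      rw [Real.norm_eq_abs, Set.indicator_apply]
      by_cases h : x ∈ {y : ℝ | (m:ℝ) < |y|}
      · rw [if_pos h]; simp
      · rw [if_neg h]; simp
    · filter_upwards with x
      have : ∀ᶠ m : ℕ in atTop, Set.indicator {y : ℝ | (m:ℝ) < |y|} (fun y => |y|) x = 0 := by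
        filter_upwards [eventually_ge_atTop ⌈|x|⌉₊] with m hm
        apply Set.indicator_of_notMem
        simp only [Set.mem_setOf_eq, not_lt]
        exact le_trans (Nat.le_ceil _) (by exact_mod_cast hm)
      exact Tendsto.congr' (this.mono fun m hm => hm.symm) tendsto_const_nhds
  obtain ⟨m₀, hm₀⟩ := (hItend.eventually_le_const (show (0:ℝ) < 1 by norm_num)).exists
  set I := ∫ x, Set.indicator {y : ℝ | (m₀:ℝ) < |y|} (fun y => |y|) x ∂f0 with hI
  -- choose N with W1e (fn n) f0 ≤ 1 for n ≥ N
  obtain ⟨N, hN⟩ := (hconv.eventually_lt_const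
    (show (0:ℝ≥0∞) < ENNReal.ofReal 1 by simp)).exists_forall_of_atTop
  -- test function
  set f : ℝ → ℝ := fun x => min (max (|x| - (m₀:ℝ)) 0) L with hfdef
  have hlip : LipschitzWith 1 f := by
    have h : Isometry (fun y : ℝ => y - (m₀:ℝ)) := Isometry.of_dist_eq (fun a b => by simp [Real.dist_eq])
    have h2 : LipschitzWith 1 (fun x : ℝ => |x| - (m₀:ℝ)) := by
      simpa [Function.comp_def, Real.norm_eq_abs] using (h.lipschitz).comp (lipschitzWith_one_norm (E := ℝ))
    exact (h2.max_const 0).min_const L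
  have hf_nonneg : ∀ x, 0 ≤ f x := fun x => le_min (le_max_right _ _) hL.le
  have hf_le : ∀ x, f x ≤ L := fun x => min_le_right _ _
  have hf_bdd : ∀ x, |f x| ≤ L := fun x => abs_le.2 ⟨by linarith [hf_nonneg x], hf_le x⟩
  have hfint : ∀ (μ : Measure ℝ) [IsProbabilityMeasure μ], Integrable f μ :=
    fun μ _ => integrable_of_bdd hlip.continuous hf_bdd
  -- (ii) : ∫ f df0 ≤ I
  have hii : ∫ x, f x ∂f0 ≤ I := by
    apply integral_mono (hfint f0) (habs.indicator (by
      exact measurableSet_lt measurable_const measurable_abs))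
    intro x
    rw [Set.indicator_apply]
    by_cases h : x ∈ {y : ℝ | (m₀:ℝ) < |y|}
    · rw [if_pos h]
      calc f x ≤ max (|x| - m₀) 0 := min_le_left _ _
        _ ≤ |x| := by
            apply max_le (by linarith [Nat.cast_nonneg (α := ℝ) m₀]) (abs_nonneg x)
    · rw [if_neg h]
      simp only [Set.mem_setOf_eq, not_lt] at h
      have : max (|x| - (m₀:ℝ)) 0 = 0 := max_eq_right (by linarith)
      simp [hfdef, this, hL.le]
  -- (i) : lower bound on tails for any prob μ
  set T : Set ℝ := Iic (-((m₀:ℝ) + L)) ∪ Ioi ((m₀:ℝ) + L) with hT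
  have hTm : MeasurableSet T := measurableSet_Iic.union measurableSet_Ioi
  have hi : ∀ (μ : Measure ℝ) [IsProbabilityMeasure μ],
      L * (μ T).toReal ≤ ∫ x, f x ∂μ := by
    intro μ _
    have h1 : L * (μ T).toReal ≤ ∫ x in T, f x ∂μ := by
      rw [mul_comm, ← smul_eq_mul, ← measureReal_def]
      apply setIntegral_ge_of_const_le hTm (measure_ne_top _ _)
      · intro x hx
        have habs : (m₀:ℝ) + L ≤ |x| := by
          rcases hx with hx | hx
          · simp only [Set.mem_Iic] at hx
            rw [abs_of_nonpos (by nlinarith [Nat.cast_nonneg (α := ℝ) m₀])]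
            linarith
          · simp only [Set.mem_Ioi] at hx
            calc (m₀:ℝ) + L ≤ x := hx.le
              _ ≤ |x| := le_abs_self x
        have : L ≤ max (|x| - m₀) 0 := le_max_of_le_left (by linarith)
        exact le_min this le_rfl
      · exact (hfint μ).integrableOn
    have h2 : ∫ x in T, f x ∂μ ≤ ∫ x, f x ∂μ :=
      setIntegral_le_integral (hfint μ) (Eventually.of_forall hf_nonneg)
    linarith
  -- main estimate for n ≥ N
  have hmain : ∀ n, N ≤ n → ((Fn n) T).toReal ≤ ε := by
    intro n hn
    have e1 : (∫ x, f x ∂(Fn n)) - ∫ x, f x ∂(fn n) ≤ r :=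
      w1e_integral_le hr (hFn n) hlip ⟨L, hf_bdd⟩
    have e2 : (∫ x, f x ∂(fn n)) - ∫ x, f x ∂f0 ≤ 1 :=
      w1e_integral_le zero_le_one (hN n hn).le hlip ⟨L, hf_bdd⟩
    have e3 := hi (Fn n)
    have : L * ((Fn n) T).toReal ≤ r + 2 := by linarith
    calc ((Fn n) T).toReal ≤ (r + 2)/L := by
          rw [le_div_iff₀ hL]; linarith
      _ ≤ ε := hLε
  -- combine with finitely many small n
  have hsmall : ∀ n, ∃ M : ℝ, 0 < M ∧ ((Fn n) (Iic (-M))).toReal ≤ ε ∧ ((Fn n) (Ioi M)).toReal ≤ ε :=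
    fun n => single_tail (Fn n) hε
  choose Ms hMs using hsmall
  set M : ℝ := max ((m₀:ℝ) + L) (((Finset.range N).sup fun n => ⌈Ms n⌉₊ : ℕ)) with hM
  refine ⟨M, lt_of_lt_of_le (by positivity) (le_max_left _ _), fun n => ?_⟩
  rcases le_or_gt N n with hn | hn
  · have hε' := hmain n hn
    have hsub1 : Iic (-M) ⊆ T := by
      intro x hx
      simp only [Set.mem_Iic] at hx
      exact Or.inl (by simp only [Set.mem_Iic]; exact le_trans hx (neg_le_neg (le_max_left _ _)))
    have hsub2 : Ioi M ⊆ T := by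
      intro x hx
      simp only [Set.mem_Ioi] at hx
      exact Or.inr (by simp only [Set.mem_Ioi]; exact lt_of_le_of_lt (le_max_left _ _) hx)
    exact ⟨le_trans (prob_toReal_mono hsub1) hε', le_trans (prob_toReal_mono hsub2) hε'⟩
  · have hMn : Ms n ≤ M := by
      calc Ms n ≤ (⌈Ms n⌉₊ : ℝ) := Nat.le_ceil _
        _ ≤ (((Finset.range N).sup fun n => ⌈Ms n⌉₊ : ℕ) : ℝ) := by
            exact_mod_cast Nat.cast_le.2 (Finset.le_sup (f := fun n => ⌈Ms n⌉₊) (Finset.mem_range.2 hn))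
        _ ≤ M := le_max_right _ _
    refine ⟨le_trans (prob_toReal_mono (Iic_subset_Iic.2 (neg_le_neg hMn))) (hMs n).2.1,
      le_trans (prob_toReal_mono (Ioi_subset_Ioi hMn)) (hMs n).2.2⟩


lemma prob_toReal_nonneg {μ : Measure ℝ} (s : Set ℝ) : 0 ≤ (μ s).toReal := ENNReal.toReal_nonneg

lemma prob_toReal_le_one {μ : Measure ℝ} [IsProbabilityMeasure μ] (s : Set ℝ) :
    (μ s).toReal ≤ 1 := by
  have := ENNReal.toReal_mono (by simp) (prob_le_one (μ := μ) (s := s))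
  simpa using this

lemma exists_subseq_cdf_conv (Fn : ℕ → Measure ℝ) [∀ n, IsProbabilityMeasure (Fn n)] :
    ∃ φ : ℕ → ℕ, StrictMono φ ∧ ∃ c : ℚ → ℝ,
      (∀ q, 0 ≤ c q ∧ c q ≤ 1) ∧ (∀ p q : ℚ, p ≤ q → c p ≤ c q) ∧
      ∀ q : ℚ, Tendsto (fun k => ((Fn (φ k)) (Iic (q:ℝ))).toReal) atTop (𝓝 (c q)) := by
  set x : ℕ → (ℚ → Icc (0:ℝ) 1) := fun n q =>
    ⟨((Fn n) (Iic (q:ℝ))).toReal, ⟨prob_toReal_nonneg _, prob_toReal_le_one _⟩⟩ with hx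
  obtain ⟨γ, -, φ, hφ, hconv⟩ := (isCompact_univ (X := ℚ → Icc (0:ℝ) 1)).tendsto_subseq
    (fun n => Set.mem_univ (x n))
  refine ⟨φ, hφ, fun q => (γ q : ℝ), fun q => (γ q).2, ?_, ?_⟩
  · intro p q hpq
    have hconv' : ∀ s : ℚ, Tendsto (fun k => ((Fn (φ k)) (Iic (s:ℝ))).toReal) atTop (𝓝 (γ s : ℝ)) :=
      fun s => (continuous_subtype_val.tendsto _).comp ((tendsto_pi_nhds.1 hconv) s)
    refine le_of_tendsto_of_tendsto' (hconv' p) (hconv' q) (fun k => ?_)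
    exact ENNReal.toReal_mono (measure_ne_top _ _)
      (measure_mono (Iic_subset_Iic.2 (by exact_mod_cast hpq)))
  · exact fun q => (continuous_subtype_val.tendsto _).comp ((tendsto_pi_nhds.1 hconv) q)


lemma stieltjes_of_c (c : ℚ → ℝ) (hc0 : ∀ q, 0 ≤ c q)
    (hmono : ∀ p q : ℚ, p ≤ q → c p ≤ c q) :
    ∃ S : StieltjesFunction ℝ,
      (∀ x : ℝ, ∀ q : ℚ, x < (q:ℝ) → S x ≤ c q) ∧
      (∀ x : ℝ, ∀ p : ℚ, (p:ℝ) ≤ x → c p ≤ S x) ∧ (∀ x, 0 ≤ S x) := by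
  have hne : ∀ x : ℝ, Nonempty {q : ℚ // x < (q:ℝ)} := by
    intro x; obtain ⟨q, hq⟩ := exists_rat_gt x; exact ⟨⟨q, hq⟩⟩
  set H : ℝ → ℝ := fun x => ⨅ q : {q : ℚ // x < (q:ℝ)}, c q.1 with hH
  have hbdd : ∀ x : ℝ, BddBelow (Set.range fun q : {q : ℚ // x < (q:ℝ)} => c q.1) :=
    fun x => ⟨0, by rintro y ⟨⟨q, hq⟩, rfl⟩; exact hc0 q⟩
  have hle : ∀ x : ℝ, ∀ q : ℚ, x < (q:ℝ) → H x ≤ c q := by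
    intro x q hq
    exact ciInf_le (hbdd x) (⟨q, hq⟩ : {q : ℚ // x < (q:ℝ)})
  have hge : ∀ x : ℝ, ∀ p : ℚ, (p:ℝ) ≤ x → c p ≤ H x := by
    intro x p hp
    haveI := hne x
    refine le_ciInf fun ⟨q, hq⟩ => hmono p q ?_
    exact_mod_cast le_of_lt (lt_of_le_of_lt hp hq)
  have h0 : ∀ x, 0 ≤ H x := by
    intro x
    haveI := hne x
    exact le_ciInf fun ⟨q, _⟩ => hc0 q
  have hHmono : Monotone H := by
    intro x y hxy
    haveI := hne y
    refine le_ciInf fun ⟨q, hq⟩ => hle x q (lt_of_le_of_lt hxy hq)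
  have hrc : ∀ x, ContinuousWithinAt H (Ici x) x := by
    intro x
    rw [ContinuousWithinAt]
    refine tendsto_order.2 ⟨fun a ha => ?_, fun b hb => ?_⟩
    · exact eventually_of_mem self_mem_nhdsWithin fun z hz => lt_of_lt_of_le ha (hHmono hz)
    · haveI := hne x
      obtain ⟨⟨q, hq⟩, hcq⟩ := exists_lt_of_ciInf_lt (show H x < b from hb)
      refine eventually_of_mem (Ico_mem_nhdsGE hq) fun z hz => ?_
      exact lt_of_le_of_lt (hle z q hz.2) hcq
  exact ⟨⟨H, hHmono, hrc⟩, hle, hge, h0⟩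


lemma prob_Ioc_toReal {ν : Measure ℝ} [IsProbabilityMeasure ν] {s t : ℝ} (h : s ≤ t) :
    (ν (Ioc s t)).toReal = (ν (Iic t)).toReal - (ν (Iic s)).toReal := by
  have he : Ioc s t = Iic t \ Iic s := by ext x; simp [and_comm]
  rw [he, measure_diff (Iic_subset_Iic.2 h) measurableSet_Iic.nullMeasurableSet
    (measure_ne_top _ _),
    ENNReal.toReal_sub_of_le (measure_mono (Iic_subset_Iic.2 h)) (measure_ne_top _ _)]

lemma prob_Ioi_toReal {ν : Measure ℝ} [IsProbabilityMeasure ν] (s : ℝ) :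
    (ν (Ioi s)).toReal = 1 - (ν (Iic s)).toReal := by
  have := measure_compl (μ := ν) (s := Iic s) measurableSet_Iic (measure_ne_top _ _)
  rw [compl_Iic] at this
  rw [this, measure_univ,
    ENNReal.toReal_sub_of_le (prob_le_one) (by simp)]
  simp

lemma integral_split3 {ν : Measure ℝ} {g : ℝ → ℝ} (hg : Integrable g ν) {α β : ℝ} (h : α ≤ β) :
    ∫ x, g x ∂ν = (∫ x in Iic α, g x ∂ν) + (∫ x in Ioc α β, g x ∂ν) + ∫ x in Ioi β, g x ∂ν := by
  have h1 : ∫ x in Iic β, g x ∂ν = (∫ x in Iic α, g x ∂ν) + ∫ x in Ioc α β, g x ∂ν := by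
    rw [← setIntegral_union (Iic_disjoint_Ioc le_rfl) measurableSet_Ioc hg.integrableOn
      hg.integrableOn, Iic_union_Ioc_eq_Iic h]
  have h2 : ∫ x, g x ∂ν = (∫ x in Iic β, g x ∂ν) + ∫ x in Ioi β, g x ∂ν := by
    rw [← setIntegral_union (Iic_disjoint_Ioi le_rfl) measurableSet_Ioi hg.integrableOn
      hg.integrableOn, Iic_union_Ioi, setIntegral_univ]
  rw [h2, h1]

lemma integral_Ioc_sum {ν : Measure ℝ} {g : ℝ → ℝ} (hg : Integrable g ν)
    {t : ℕ → ℝ} (ht : Monotone t) (N : ℕ) :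
    ∫ x in Ioc (t 0) (t N), g x ∂ν
      = ∑ i ∈ Finset.range N, ∫ x in Ioc (t i) (t (i+1)), g x ∂ν := by
  induction N with
  | zero => simp
  | succ n ih =>
      rw [Finset.sum_range_succ, ← ih, ← setIntegral_union (Ioc_disjoint_Ioc_of_le le_rfl)
        measurableSet_Ioc hg.integrableOn hg.integrableOn,
        Ioc_union_Ioc_eq_Ioc (ht (Nat.zero_le n)) (ht (Nat.le_succ n))]

lemma riemann_key (ν : Measure ℝ) [IsProbabilityMeasure ν] (g : ℝ → ℝ) (hg : Continuous g)
    (C : ℝ) (hC : ∀ x, |g x| ≤ C)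
    (t : ℕ → ℝ) (N : ℕ) (ht : Monotone t)
    (ε2 δ : ℝ)
    (hunif : ∀ x ∈ Icc (t 0) (t N), ∀ y ∈ Icc (t 0) (t N), |x - y| < δ → |g x - g y| ≤ ε2)
    (hmesh : ∀ i, i < N → t (i+1) - t i < δ) (hε2 : 0 ≤ ε2) :
    |(∫ x, g x ∂ν) - ∑ i ∈ Finset.range N,
        g (t (i+1)) * ((ν (Iic (t (i+1)))).toReal - (ν (Iic (t i))).toReal)|
      ≤ C * (ν (Iic (t 0))).toReal + C * (ν (Ioi (t N))).toReal + ε2 := by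
  have hgint : Integrable g ν := integrable_of_bdd hg hC
  have hsplit := integral_split3 hgint (ht (Nat.zero_le N))
  set A := ∫ x in Iic (t 0), g x ∂ν with hA
  set E := ∫ x in Ioi (t N), g x ∂ν with hE
  set S := ∑ i ∈ Finset.range N,
      g (t (i+1)) * ((ν (Iic (t (i+1)))).toReal - (ν (Iic (t i))).toReal) with hS
  have hAbd : |A| ≤ C * (ν (Iic (t 0))).toReal := by
    rw [hA, ← Real.norm_eq_abs]
    exact norm_setIntegral_le_of_norm_le_const (measure_lt_top _ _)
      (fun x _ => by rw [Real.norm_eq_abs]; exact hC x)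
  have hEbd : |E| ≤ C * (ν (Ioi (t N))).toReal := by
    rw [hE, ← Real.norm_eq_abs]
    exact norm_setIntegral_le_of_norm_le_const (measure_lt_top _ _)
      (fun x _ => by rw [Real.norm_eq_abs]; exact hC x)
  have hB : ∫ x in Ioc (t 0) (t N), g x ∂ν
      = ∑ i ∈ Finset.range N, ∫ x in Ioc (t i) (t (i+1)), g x ∂ν :=
    integral_Ioc_sum hgint ht N
  -- per-term bound
  have hterm : ∀ i, i < N →
      |(∫ x in Ioc (t i) (t (i+1)), g x ∂ν)
        - g (t (i+1)) * ((ν (Iic (t (i+1)))).toReal - (ν (Iic (t i))).toReal)|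
      ≤ ε2 * (ν (Ioc (t i) (t (i+1)))).toReal := by
    intro i hi
    rw [← prob_Ioc_toReal (ht (Nat.le_succ i))]
    have hconst : g (t (i+1)) * (ν (Ioc (t i) (t (i+1)))).toReal
        = ∫ _x in Ioc (t i) (t (i+1)), g (t (i+1)) ∂ν := by
      rw [setIntegral_const, smul_eq_mul, measureReal_def]; ring
    rw [hconst, ← integral_sub hgint.integrableOn (integrable_const _), ← Real.norm_eq_abs]
    apply norm_setIntegral_le_of_norm_le_const (measure_lt_top _ _) ?_
    intro x hx
    rw [Real.norm_eq_abs]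
    have hx1 : t i < x := hx.1
    have hx2 : x ≤ t (i+1) := hx.2
    have hxmem : x ∈ Icc (t 0) (t N) :=
      ⟨le_trans (ht (Nat.zero_le i)) hx1.le, le_trans hx2 (ht hi)⟩
    have htmem : t (i+1) ∈ Icc (t 0) (t N) := ⟨ht (Nat.zero_le _), ht hi⟩
    apply hunif x hxmem (t (i+1)) htmem
    rw [abs_sub_lt_iff]
    constructor
    · linarith [hmesh i hi]
    · linarith [hmesh i hi]
  have hsum : |(∫ x in Ioc (t 0) (t N), g x ∂ν) - S| ≤ ε2 := by
    rw [hB, hS, ← Finset.sum_sub_distrib]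
    calc |∑ i ∈ Finset.range N, ((∫ x in Ioc (t i) (t (i+1)), g x ∂ν)
          - g (t (i+1)) * ((ν (Iic (t (i+1)))).toReal - (ν (Iic (t i))).toReal))|
        ≤ ∑ i ∈ Finset.range N, |(∫ x in Ioc (t i) (t (i+1)), g x ∂ν)
          - g (t (i+1)) * ((ν (Iic (t (i+1)))).toReal - (ν (Iic (t i))).toReal)| :=
          Finset.abs_sum_le_sum_abs _ _
      _ ≤ ∑ i ∈ Finset.range N, ε2 * (ν (Ioc (t i) (t (i+1)))).toReal := by
          apply Finset.sum_le_sum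
          intro i hi
          exact hterm i (Finset.mem_range.1 hi)
      _ = ε2 * ∑ i ∈ Finset.range N,
            ((ν (Iic (t (i+1)))).toReal - (ν (Iic (t i))).toReal) := by
          rw [Finset.mul_sum]
          congr 1
          ext i
          rw [prob_Ioc_toReal (ht (Nat.le_succ i))]
      _ = ε2 * ((ν (Iic (t N))).toReal - (ν (Iic (t 0))).toReal) := by
          rw [Finset.sum_range_sub (fun i => (ν (Iic (t i))).toReal)]
      _ ≤ ε2 * 1 := by
          apply mul_le_mul_of_nonneg_left _ hε2
          have h1 : (ν (Iic (t N))).toReal ≤ 1 := by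
            have := ENNReal.toReal_mono (by simp) (prob_le_one (μ := ν) (s := Iic (t N)))
            simpa using this
          have h2 : (0:ℝ) ≤ (ν (Iic (t 0))).toReal := ENNReal.toReal_nonneg
          linarith
      _ = ε2 := mul_one ε2
  calc |(∫ x, g x ∂ν) - S|
      = |A + ((∫ x in Ioc (t 0) (t N), g x ∂ν) - S) + E| := by rw [hsplit]; ring_nf
    _ ≤ |A + ((∫ x in Ioc (t 0) (t N), g x ∂ν) - S)| + |E| := abs_add_le _ _
    _ ≤ |A| + |(∫ x in Ioc (t 0) (t N), g x ∂ν) - S| + |E| := by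
        linarith [abs_add_le A ((∫ x in Ioc (t 0) (t N), g x ∂ν) - S)]
    _ ≤ C * (ν (Iic (t 0))).toReal + ε2 + C * (ν (Ioi (t N))).toReal := by
        linarith
    _ = C * (ν (Iic (t 0))).toReal + C * (ν (Ioi (t N))).toReal + ε2 := by ring


lemma tendsto_integral_of_cdf_conv
    (μs : ℕ → Measure ℝ) (μ : Measure ℝ) [∀ k, IsProbabilityMeasure (μs k)]
    [IsProbabilityMeasure μ] (D : Set ℝ) (hD : Dense D)
    (hcdf : ∀ x ∈ D, Tendsto (fun k => ((μs k) (Iic x)).toReal) atTop (𝓝 ((μ (Iic x)).toReal)))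
    (htight : ∀ ε : ℝ, 0 < ε → ∃ M, 0 < M ∧ ∀ k,
      ((μs k) (Iic (-M))).toReal ≤ ε ∧ ((μs k) (Ioi M)).toReal ≤ ε)
    (g : ℝ → ℝ) (hg : Continuous g) (C : ℝ) (hC : ∀ x, |g x| ≤ C) :
    Tendsto (fun k => ∫ x, g x ∂(μs k)) atTop (𝓝 (∫ x, g x ∂μ)) := by
  have hC0 : 0 ≤ C := le_trans (abs_nonneg _) (hC 0)
  rw [Metric.tendsto_atTop]
  intro ε hε
  set ε' : ℝ := ε / (16 * (C + 1)) with hε'def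
  have hε'pos : 0 < ε' := by positivity
  obtain ⟨M, hMpos, htails⟩ := htight ε' hε'pos
  set ε2 : ℝ := ε / 8 with hε2def
  have hε2pos : 0 < ε2 := by positivity
  set a : ℝ := -M - 2 with hadef
  -- uniform continuity on a big compact
  set K : Set ℝ := Icc (a - 1) (M + 4) with hKdef
  have hgK : UniformContinuousOn g K :=
    (isCompact_Icc).uniformContinuousOn_of_continuous hg.continuousOn
  obtain ⟨δ, hδpos, hδ⟩ := (Metric.uniformContinuousOn_iff).1 hgK ε2 hε2pos
  -- grid step
  set h : ℝ := (min δ 1) / 4 with hhdef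
  have hhpos : 0 < h := by
    have : 0 < min δ 1 := lt_min hδpos one_pos
    positivity
  have hhδ : 3 * h / 2 < δ := by
    have h1 : min δ 1 ≤ δ := min_le_left _ _
    have : h ≤ δ / 4 := by rw [hhdef]; linarith
    linarith
  have hh1 : h ≤ 1 / 4 := by
    have : min δ 1 ≤ 1 := min_le_right _ _
    rw [hhdef]; linarith
  set N : ℕ := ⌈(M + 1 - a) / h⌉₊ + 1 with hNdef
  have hNh_ge : M + 1 + h ≤ a + N * h := by
    have h1 : (M + 1 - a) / h ≤ (⌈(M + 1 - a) / h⌉₊ : ℝ) := Nat.le_ceil _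
    have h2 : M + 1 - a ≤ (⌈(M + 1 - a) / h⌉₊ : ℝ) * h := by
      rw [← div_le_iff₀ hhpos] at *
      exact h1
    have : (N : ℝ) * h = (⌈(M + 1 - a) / h⌉₊ : ℝ) * h + h := by
      rw [hNdef]; push_cast; ring
    linarith
  have hNh_le : a + N * h ≤ M + 3 := by
    have h0 : (0:ℝ) ≤ (M + 1 - a) / h := by
      apply div_nonneg _ hhpos.le
      rw [hadef]; linarith
    have h1 : (⌈(M + 1 - a) / h⌉₊ : ℝ) < (M + 1 - a) / h + 1 :=
      Nat.ceil_lt_add_one h0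
    have h2 : (⌈(M + 1 - a) / h⌉₊ : ℝ) * h < (M + 1 - a) + h := by
      calc (⌈(M + 1 - a) / h⌉₊ : ℝ) * h < ((M + 1 - a) / h + 1) * h := by
            apply mul_lt_mul_of_pos_right h1 hhpos
        _ = (M + 1 - a) + h := by field_simp
    have h3 : (N : ℝ) * h = (⌈(M + 1 - a) / h⌉₊ : ℝ) * h + h := by
      rw [hNdef]; push_cast; ring
    linarith
  -- partition points in D
  have hpt : ∀ i : ℕ, ∃ y ∈ D, y ∈ Ioo (a + i * h - h / 4) (a + i * h + h / 4) := by
    intro i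
    exact hD.exists_mem_open isOpen_Ioo (nonempty_Ioo.2 (by linarith))
  choose t htD htIoo using hpt
  have htlo : ∀ i : ℕ, a + i * h - h / 4 < t i := fun i => (htIoo i).1
  have hthi : ∀ i : ℕ, t i < a + i * h + h / 4 := fun i => (htIoo i).2
  have htsm : StrictMono t := by
    apply strictMono_nat_of_lt_succ
    intro i
    have := htlo (i + 1)
    have := hthi i
    push_cast at *
    nlinarith
  have htmono : Monotone t := htsm.monotone
  have hmesh : ∀ i, i < N → t (i + 1) - t i < δ := by
    intro i _
    have h1 := htlo i
    have h2 := hthi (i + 1)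
    push_cast at *
    nlinarith
  have ht0_le : t 0 ≤ -M := by
    have := hthi 0
    push_cast at this
    have : t 0 < a + h / 4 := by linarith
    have ha' : a = -M - 2 := rfl
    linarith
  have htN_ge : M < t N := by
    have := htlo N
    linarith
  have htsubK : Icc (t 0) (t N) ⊆ K := by
    apply Icc_subset_Icc
    · have := htlo 0; push_cast at this; linarith
    · have := hthi N; linarith
  have hunif : ∀ x ∈ Icc (t 0) (t N), ∀ y ∈ Icc (t 0) (t N), |x - y| < δ → |g x - g y| ≤ ε2 := by
    intro x hx y hy hxy
    have := hδ x (htsubK hx) y (htsubK hy) (by rwa [Real.dist_eq])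
    rw [Real.dist_eq] at this
    exact this.le
  -- Riemann sums
  set S : ℕ → ℝ := fun k => ∑ i ∈ Finset.range N,
      g (t (i+1)) * (((μs k) (Iic (t (i+1)))).toReal - ((μs k) (Iic (t i))).toReal) with hSdef
  set Sinf : ℝ := ∑ i ∈ Finset.range N,
      g (t (i+1)) * ((μ (Iic (t (i+1)))).toReal - (μ (Iic (t i))).toReal) with hSinfdef
  -- bounds via riemann_key
  have hkeyk : ∀ k, |(∫ x, g x ∂(μs k)) - S k| ≤ 2 * C * ε' + ε2 := by
    intro k
    have hkey := riemann_key (μs k) g hg C hC t N htmono ε2 δ hunif hmesh hε2pos.le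
    have ht1 : ((μs k) (Iic (t 0))).toReal ≤ ε' :=
      le_trans (prob_toReal_mono (Iic_subset_Iic.2 ht0_le)) (htails k).1
    have ht2 : ((μs k) (Ioi (t N))).toReal ≤ ε' :=
      le_trans (prob_toReal_mono (Ioi_subset_Ioi htN_ge.le)) (htails k).2
    calc |(∫ x, g x ∂(μs k)) - S k|
        ≤ C * ((μs k) (Iic (t 0))).toReal + C * ((μs k) (Ioi (t N))).toReal + ε2 := hkey
      _ ≤ 2 * C * ε' + ε2 := by nlinarith
  have hμt1 : (μ (Iic (t 0))).toReal ≤ ε' := by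
    apply le_of_tendsto (hcdf (t 0) (htD 0))
    filter_upwards with k
    exact le_trans (prob_toReal_mono (Iic_subset_Iic.2 ht0_le)) (htails k).1
  have hμt2 : (μ (Ioi (t N))).toReal ≤ ε' := by
    rw [prob_Ioi_toReal]
    have : 1 - ε' ≤ (μ (Iic (t N))).toReal := by
      apply ge_of_tendsto (hcdf (t N) (htD N))
      filter_upwards with k
      have := le_trans (prob_toReal_mono (Ioi_subset_Ioi htN_ge.le)) (htails k).2
      rw [prob_Ioi_toReal] at this
      linarith
    linarith
  have hkeyμ : |(∫ x, g x ∂μ) - Sinf| ≤ 2 * C * ε' + ε2 := by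
    have hkey := riemann_key μ g hg C hC t N htmono ε2 δ hunif hmesh hε2pos.le
    calc |(∫ x, g x ∂μ) - Sinf|
        ≤ C * (μ (Iic (t 0))).toReal + C * (μ (Ioi (t N))).toReal + ε2 := hkey
      _ ≤ 2 * C * ε' + ε2 := by nlinarith
  -- S k → Sinf
  have hStend : Tendsto S atTop (𝓝 Sinf) := by
    rw [hSdef, hSinfdef]
    apply tendsto_finset_sum
    intro i _
    exact ((hcdf (t (i+1)) (htD (i+1))).sub (hcdf (t i) (htD i))).const_mul _
  obtain ⟨K0, hK0⟩ := (Metric.tendsto_atTop).1 hStend ε2 hε2pos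
  refine ⟨K0, fun k hk => ?_⟩
  have h1 := hkeyk k
  have h2 := hkeyμ
  have h3 := hK0 k hk
  rw [Real.dist_eq] at h3 ⊢
  have hCε' : 2 * C * ε' ≤ ε / 8 := by
    have he : ε' = ε / (16 * (C + 1)) := rfl
    have hu : 16 * (ε' * C) + 16 * ε' = ε := by rw [he]; field_simp
    have h2 : 2 * C * ε' = 2 * (ε' * C) := by ring
    rw [h2]
    linarith [mul_nonneg hε'pos.le hC0, hε'pos.le]
  calc |(∫ x, g x ∂(μs k)) - ∫ x, g x ∂μ|
      ≤ |(∫ x, g x ∂(μs k)) - S k| + (|S k - Sinf| + |Sinf - ∫ x, g x ∂μ|) := by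
        have e1 := abs_sub_le (∫ x, g x ∂(μs k)) (S k) (∫ x, g x ∂μ)
        have e2 := abs_sub_le (S k) Sinf (∫ x, g x ∂μ)
        linarith
    _ ≤ (2 * C * ε' + ε2) + ε2 + (2 * C * ε' + ε2) := by
        have := abs_sub_comm Sinf (∫ x, g x ∂μ)
        linarith [h2, abs_sub_comm (∫ x, g x ∂μ) Sinf]
    _ ≤ ε / 8 + ε / 8 + ε / 8 + ε / 8 + ε / 8 := by
        rw [hε2def]; linarith
    _ < ε := by linarith

lemma lt_of_ofReal_le {a b : ℝ} (hb : 0 ≤ b)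
    (h : ENNReal.ofReal a ≤ ENNReal.ofReal b) : a ≤ b := by
  rcases le_or_gt a 0 with h0 | h0
  · linarith
  · exact (ENNReal.ofReal_le_ofReal_iff hb).mp h

theorem subseq_weak_limit_of_moving_wasserstein_balls (r : ℝ) (hr : 0 ≤ r)
    (fn : ℕ → Measure ℝ) (f0 : Measure ℝ)
    [∀ n, IsProbabilityMeasure (fn n)] [IsProbabilityMeasure f0]
    (hfn : ∀ n, Integrable id (fn n)) (hf0 : Integrable id f0)
    (hconv : Tendsto (fun n => W1e (fn n) f0) atTop (nhds 0))
    (Fn : ℕ → Measure ℝ) [∀ n, IsProbabilityMeasure (Fn n)]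
    (hFn : ∀ n, W1e (Fn n) (fn n) ≤ ENNReal.ofReal r) :
    ∃ φ : ℕ → ℕ, StrictMono φ ∧ ∃ F0 : Measure ℝ, IsProbabilityMeasure F0 ∧
      W1e F0 f0 ≤ ENNReal.ofReal r ∧
      ∀ g : ℝ → ℝ, Continuous g → (∃ C, ∀ x, |g x| ≤ C) →
        Tendsto (fun k => ∫ x, g x ∂(Fn (φ k))) atTop (nhds (∫ x, g x ∂F0)) := by
  obtain ⟨φ, hφ, c, hc01, hcmono, hcconv⟩ := exists_subseq_cdf_conv Fn
  obtain ⟨S, hSle, hSge, hS0⟩ := stieltjes_of_c c (fun q => (hc01 q).1) hcmono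
  have htight := fun {ε : ℝ} (hε : 0 < ε) => tight_Fn r hr fn f0 hf0 hconv Fn hFn hε
  -- S ≤ 1
  have hS1 : ∀ x, S x ≤ 1 := by
    intro x
    obtain ⟨q, hq⟩ := exists_rat_gt x
    exact le_trans (hSle x q hq) (hc01 q).2
  -- limits of S at ±∞
  have hbot : Tendsto (fun x => S x) atBot (𝓝 0) := by
    refine tendsto_order.2 ⟨fun a ha => Eventually.of_forall fun x => lt_of_lt_of_le ha (hS0 x),
      fun b hb => ?_⟩
    obtain ⟨M, hMpos, hM⟩ := htight (show (0:ℝ) < b/2 by linarith)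
    filter_upwards [eventually_lt_atBot (-M - 1)] with x hx
    obtain ⟨q, hq1, hq2⟩ := exists_rat_btwn (show x < -M by linarith)
    have hcq : c q ≤ b/2 := by
      apply le_of_tendsto (hcconv q)
      filter_upwards with k
      exact le_trans (prob_toReal_mono (Iic_subset_Iic.2 hq2.le)) (hM (φ k)).1
    calc S x ≤ c q := hSle x q hq1
      _ ≤ b/2 := hcq
      _ < b := by linarith
  have htop : Tendsto (fun x => S x) atTop (𝓝 1) := by
    refine tendsto_order.2 ⟨fun a ha => ?_, fun b hb =>
      Eventually.of_forall fun x => lt_of_le_of_lt (hS1 x) hb⟩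
    obtain ⟨M, hMpos, hM⟩ := htight (show (0:ℝ) < (1 - a)/2 by linarith)
    filter_upwards [eventually_gt_atTop (M + 1)] with x hx
    obtain ⟨p, hp1, hp2⟩ := exists_rat_btwn (show M < x by linarith)
    have hcp : 1 - (1 - a)/2 ≤ c p := by
      apply ge_of_tendsto (hcconv p)
      filter_upwards with k
      have h1 := (hM (φ k)).2
      rw [prob_Ioi_toReal] at h1
      have h2 : ((Fn (φ k)) (Iic (M : ℝ))).toReal ≤ ((Fn (φ k)) (Iic (p : ℝ))).toReal :=
        prob_toReal_mono (Iic_subset_Iic.2 hp1.le)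
      linarith
    have := hSge x p hp2.le
    calc a < 1 - (1 - a)/2 := by linarith
      _ ≤ c p := hcp
      _ ≤ S x := this
  -- the limit measure
  set F0 : Measure ℝ := S.measure with hF0def
  have hF0prob : IsProbabilityMeasure F0 := by
    constructor
    rw [hF0def, S.measure_univ hbot htop]
    simp
  haveI := hF0prob
  have hIic : ∀ x, (F0 (Iic x)).toReal = S x := by
    intro x
    rw [hF0def, S.measure_Iic hbot x, sub_zero, ENNReal.toReal_ofReal (hS0 x)]
  -- continuity points
  set D : Set ℝ := {x | ContinuousAt S x} with hDdef
  have hD : Dense D := by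
    have hcount : Set.Countable {x | ¬ContinuousAt S x} := S.mono.countable_not_continuousAt
    have : D = {x | ¬ContinuousAt S x}ᶜ := by
      ext x; simp [hDdef]
    rw [this]
    exact hcount.dense_compl ℝ
  -- cdf convergence at continuity points
  have hcdfD : ∀ x ∈ D, Tendsto (fun k => ((Fn (φ k)) (Iic x)).toReal) atTop
      (𝓝 ((F0 (Iic x)).toReal)) := by
    intro x hx
    rw [hIic]
    rw [Metric.tendsto_atTop]
    intro ε hε
    obtain ⟨δ, hδpos, hδ⟩ := Metric.continuousAt_iff.1 hx (ε/4) (by linarith)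
    obtain ⟨p, hp1, hp2⟩ := exists_rat_btwn (show x - δ/2 < x by linarith)
    obtain ⟨q, hq1, hq2⟩ := exists_rat_btwn (show x < x + δ/2 by linarith)
    set y : ℝ := x - (3/4) * δ with hydef
    have hyp : y < (p:ℝ) := by rw [hydef]; linarith
    have hSy : S x - ε/4 < S y := by
      have := hδ (show dist y x < δ by rw [Real.dist_eq, hydef]; rw [abs_sub_lt_iff]; constructor <;> linarith)
      rw [Real.dist_eq, abs_sub_lt_iff] at this
      linarith [this.2]
    have hSq : S (q:ℝ) < S x + ε/4 := by
      have := hδ (show dist (q:ℝ) x < δ by rw [Real.dist_eq, abs_sub_lt_iff]; constructor <;> linarith)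
      rw [Real.dist_eq, abs_sub_lt_iff] at this
      linarith [this.1]
    have hcp : S y ≤ c p := hSle y p hyp
    have hcq : c q ≤ S (q:ℝ) := hSge (q:ℝ) q le_rfl
    obtain ⟨K1, hK1⟩ := (Metric.tendsto_atTop).1 (hcconv p) (ε/4) (by linarith)
    obtain ⟨K2, hK2⟩ := (Metric.tendsto_atTop).1 (hcconv q) (ε/4) (by linarith)
    refine ⟨max K1 K2, fun k hk => ?_⟩
    have h1 := hK1 k (le_trans (le_max_left _ _) hk)
    have h2 := hK2 k (le_trans (le_max_right _ _) hk)
    rw [Real.dist_eq, abs_sub_lt_iff] at h1 h2 ⊢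
    have hmono1 : ((Fn (φ k)) (Iic (p:ℝ))).toReal ≤ ((Fn (φ k)) (Iic x)).toReal :=
      prob_toReal_mono (Iic_subset_Iic.2 hp2.le)
    have hmono2 : ((Fn (φ k)) (Iic x)).toReal ≤ ((Fn (φ k)) (Iic (q:ℝ))).toReal :=
      prob_toReal_mono (Iic_subset_Iic.2 hq1.le)
    constructor
    · -- G x - S x < ε
      have : ((Fn (φ k)) (Iic (q:ℝ))).toReal < c q + ε/4 := by linarith [h2.1]
      linarith
    · -- S x - G x < ε
      have : c p - ε/4 < ((Fn (φ k)) (Iic (p:ℝ))).toReal := by linarith [h1.2]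
      linarith
  -- tightness for the subsequence
  have htightφ : ∀ ε : ℝ, 0 < ε → ∃ M, 0 < M ∧ ∀ k,
      ((Fn (φ k)) (Iic (-M))).toReal ≤ ε ∧ ((Fn (φ k)) (Ioi M)).toReal ≤ ε := by
    intro ε hε
    obtain ⟨M, hMpos, hM⟩ := htight hε
    exact ⟨M, hMpos, fun k => hM (φ k)⟩
  -- weak convergence
  have hweak : ∀ g : ℝ → ℝ, Continuous g → ∀ C : ℝ, (∀ x, |g x| ≤ C) →
      Tendsto (fun k => ∫ x, g x ∂(Fn (φ k))) atTop (𝓝 (∫ x, g x ∂F0)) := by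
    intro g hgc C hC
    exact tendsto_integral_of_cdf_conv (fun k => Fn (φ k)) F0 D hD hcdfD htightφ g hgc C hC
  -- W1e bound
  have hW1 : W1e F0 f0 ≤ ENNReal.ofReal r := by
    rw [W1e]
    apply iSup₂_le
    rintro f ⟨hlip, C, hbd⟩
    apply ENNReal.ofReal_le_ofReal
    -- ∫ f dF0 - ∫ f df0 ≤ r
    have h1 : Tendsto (fun k => ∫ x, f x ∂(Fn (φ k))) atTop (𝓝 (∫ x, f x ∂F0)) :=
      hweak f hlip.continuous C hbd
    -- ∫ f dfn → ∫ f df0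
    have h2 : Tendsto (fun n => ∫ x, f x ∂(fn n)) atTop (𝓝 (∫ x, f x ∂f0)) := by
      rw [Metric.tendsto_atTop]
      intro ε hε
      have hev := (hconv.eventually_lt_const
        (show (0:ℝ≥0∞) < ENNReal.ofReal (ε/2) from ENNReal.ofReal_pos.2 (by linarith)))
      obtain ⟨N, hN⟩ := hev.exists_forall_of_atTop
      refine ⟨N, fun n hn => ?_⟩
      have hle := (hN n hn).le
      have ha : (∫ x, f x ∂(fn n)) - ∫ x, f x ∂f0 ≤ ε/2 :=
        w1e_integral_le (by linarith) hle hlip ⟨C, hbd⟩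
      have hb : (∫ x, (-f) x ∂(fn n)) - ∫ x, (-f) x ∂f0 ≤ ε/2 :=
        w1e_integral_le (by linarith) hle hlip.neg ⟨C, fun x => by simpa [abs_neg] using hbd x⟩
      simp only [Pi.neg_apply, integral_neg] at hb
      rw [Real.dist_eq, abs_sub_lt_iff]
      constructor <;> linarith
    have h3 : ∀ k, ∫ x, f x ∂(Fn (φ k)) ≤ (∫ x, f x ∂(fn (φ k))) + r := by
      intro k
      have := w1e_integral_le hr (hFn (φ k)) hlip ⟨C, hbd⟩
      linarith
    have h4 : Tendsto (fun k => (∫ x, f x ∂(fn (φ k))) + r) atTop (𝓝 ((∫ x, f x ∂f0) + r)) :=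
      (h2.comp hφ.tendsto_atTop).add_const r
    have := le_of_tendsto_of_tendsto' h1 h4 h3
    linarith
  exact ⟨φ, hφ, F0, hF0prob, hW1, fun g hgc hgb => by
    obtain ⟨C, hC⟩ := hgb
    exact hweak g hgc C hC⟩
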